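/- If a shortest path graph H contains an induced cycle Cₖ for some odd k > 5, then H contains an induced 4-cycle. -/

import Mathlib

open SimpleGraph

variable {V : Type*}

/-- An `(a,b)`-geodesic in `G`: a shortest path from `a` to `b`. -/
def Geodesic (G : SimpleGraph V) (a b : V) : Type _ :=
  {p : G.Walk a b // p.IsPath ∧ p.length = G.dist a b}

/-- The set of index levels at which two geodesics differ
(position `i` in the support list is index level `i`; position `0` is `a`). -/
def diffIndices (G : SimpleGraph V) (a b : V) (U W : Geodesic G a b) : Set ℕ :=
  {i | U.1.support[i]? ≠ W.1.support[i]?}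

/-- The shortest path graph `S(G,a,b)`: vertices are the `(a,b)`-geodesics,
two geodesics being adjacent iff they differ at exactly one index level. -/
def SPG (G : SimpleGraph V) (a b : V) : SimpleGraph (Geodesic G a b) where
  Adj U W := ∃! i, i ∈ diffIndices G a b U W
  symm := by
    constructor
    rintro U W ⟨i, hi, hu⟩
    exact ⟨i, Ne.symm hi, fun j hj => hu j (Ne.symm hj)⟩
  loopless := by
    constructor
    rintro U ⟨i, hi, -⟩
    exact hi rfl

section Aux

variable {G : SimpleGraph V} {a b : V}

private lemma walk_ext' : ∀ {u v : V} (p q : G.Walk u v), p.length = q.length →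
    (∀ t, p.getVert t = q.getVert t) → p = q := by
  intro u v p
  induction p with
  | nil =>
    intro q hl _
    cases q with
    | nil => rfl
    | cons h q => simp at hl
  | @cons _ m _ h p ih =>
    intro q hl hv
    cases q with
    | nil => simp at hl
    | @cons _ x _ h' q' =>
      have hw : m = x := by
        have := hv 1
        simpa [Walk.getVert_cons_succ] using this
      subst hw
      have : p = q' := ih q' (by simpa using hl) (fun t => by
        have := hv (t + 1)
        simpa [Walk.getVert_cons_succ] using this)
      subst this
      rfl

private lemma exists_walk_getVert {u v : V} (p : G.Walk u v) (t : ℕ) :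
    ∃ q : G.Walk u (p.getVert t), q.length ≤ t := by
  induction t with
  | zero => exact ⟨Walk.nil.copy rfl (p.getVert_zero).symm, by simp⟩
  | succ t ih =>
    obtain ⟨q, hq⟩ := ih
    by_cases ht : t < p.length
    · exact ⟨q.concat (p.adj_getVert_succ ht), by simpa [Walk.length_concat] using hq⟩
    · push_neg at ht
      have h1 : p.getVert (t + 1) = p.getVert t := by
        rw [p.getVert_of_length_le ht, p.getVert_of_length_le (ht.trans (Nat.le_succ t))]
      exact ⟨q.copy rfl h1.symm, by simpa using hq.trans (Nat.le_succ t)⟩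

private lemma support_getElem?' : ∀ {u v : V} (p : G.Walk u v) (i : ℕ),
    p.support[i]? = if i ≤ p.length then some (p.getVert i) else none := by
  intro u v p
  induction p with
  | nil => intro i; cases i <;> simp [Walk.getVert]
  | cons h p ih =>
    intro i
    cases i with
    | zero => simp
    | succ i => simpa [Nat.succ_le_succ_iff] using ih i

/-- Every vertex of a geodesic at position `t ≤ d` is at distance exactly `t` from `a`. -/
private lemma geodesic_dist (U : Geodesic G a b) {t : ℕ} (ht : t ≤ G.dist a b) :
    G.dist a (U.1.getVert t) = t := by
  obtain ⟨q1, hq1⟩ := exists_walk_getVert U.1 t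
  obtain ⟨q2, hq2⟩ := exists_walk_getVert U.1.reverse (G.dist a b - t)
  have hrev : U.1.reverse.getVert (G.dist a b - t) = U.1.getVert t := by
    rw [Walk.getVert_reverse, U.2.2]
    congr 1
    omega
  let q2' : G.Walk b (U.1.getVert t) := q2.copy rfl hrev
  have hq2' : q2'.length ≤ G.dist a b - t := by simpa [q2'] using hq2
  have h1 : G.dist a (U.1.getVert t) ≤ t := le_trans (G.dist_le q1) hq1
  by_contra hne
  have hlt : G.dist a (U.1.getVert t) < t := lt_of_le_of_ne h1 hne
  obtain ⟨r, hr⟩ := q1.reachable.exists_walk_length_eq_dist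
  have hle := G.dist_le (r.append q2'.reverse)
  rw [Walk.length_append, Walk.length_reverse, hr] at hle
  omega

private lemma geodesic_getVert_b (U : Geodesic G a b) {t : ℕ} (ht : G.dist a b ≤ t) :
    U.1.getVert t = b :=
  U.1.getVert_of_length_le (by rw [U.2.2]; exact ht)

/-- Two geodesics differ exactly at level `i`. -/
def DiffAt (U W : Geodesic G a b) (i : ℕ) : Prop :=
  U.1.getVert i ≠ W.1.getVert i ∧ ∀ t, t ≠ i → U.1.getVert t = W.1.getVert t

private lemma DiffAt.symm {U W : Geodesic G a b} {i : ℕ} (h : DiffAt U W i) : DiffAt W U i :=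
  ⟨h.1.symm, fun t ht => (h.2 t ht).symm⟩

private lemma DiffAt.pos {U W : Geodesic G a b} {i : ℕ} (h : DiffAt U W i) : 0 < i := by
  rcases Nat.eq_zero_or_pos i with h0 | h0
  · exact absurd (by rw [h0, Walk.getVert_zero, Walk.getVert_zero]) h.1
  · exact h0

private lemma DiffAt.lt {U W : Geodesic G a b} {i : ℕ} (h : DiffAt U W i) : i < G.dist a b := by
  by_contra hle
  push_neg at hle
  exact h.1 (by rw [geodesic_getVert_b U hle, geodesic_getVert_b W hle])

private lemma mem_diffIndices_iff {U W : Geodesic G a b} {i : ℕ} :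
    i ∈ diffIndices G a b U W ↔ i ≤ G.dist a b ∧ U.1.getVert i ≠ W.1.getVert i := by
  unfold diffIndices
  rw [Set.mem_setOf_eq, support_getElem?', support_getElem?', U.2.2, W.2.2]
  by_cases hi : i ≤ G.dist a b <;> simp [hi]

private lemma adj_iff {U W : Geodesic G a b} :
    (SPG G a b).Adj U W ↔ ∃ i, DiffAt U W i := by
  constructor
  · rintro ⟨i, hi, huniq⟩
    rw [mem_diffIndices_iff] at hi
    refine ⟨i, hi.2, fun t ht => ?_⟩
    by_cases htle : t ≤ G.dist a b
    · by_contra hne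
      exact ht (huniq t (mem_diffIndices_iff.mpr ⟨htle, hne⟩))
    · push_neg at htle
      rw [geodesic_getVert_b U htle.le, geodesic_getVert_b W htle.le]
  · rintro ⟨i, hne, hall⟩
    have hi : DiffAt U W i := ⟨hne, hall⟩
    refine ⟨i, mem_diffIndices_iff.mpr ⟨(hi.lt).le, hne⟩, fun j hj => ?_⟩
    replace hj : j ∈ diffIndices G a b U W := hj
    rw [mem_diffIndices_iff] at hj
    by_contra hji
    exact hj.2 (hall j hji)

private lemma geodesic_ext {U W : Geodesic G a b}
    (h : ∀ t, U.1.getVert t = W.1.getVert t) : U = W :=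
  Subtype.ext (walk_ext' U.1 W.1 (by rw [U.2.2, W.2.2]) h)

/-- Build a walk from a vertex function with consecutive adjacency. -/
private def walkOfFn (G : SimpleGraph V) (f : ℕ → V) :
    (n : ℕ) → (∀ t, t < n → G.Adj (f t) (f (t + 1))) → G.Walk (f 0) (f n)
  | 0, _ => Walk.nil
  | n + 1, h => (walkOfFn G f n (fun t ht => h t (by omega))).concat (h n (by omega))

private lemma walkOfFn_length (G : SimpleGraph V) (f : ℕ → V) (n : ℕ)
    (h : ∀ t, t < n → G.Adj (f t) (f (t + 1))) : (walkOfFn G f n h).length = n := by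
  induction n with
  | zero => rfl
  | succ n ih => simp [walkOfFn, Walk.length_concat, ih]

private lemma walkOfFn_support (G : SimpleGraph V) (f : ℕ → V) (n : ℕ)
    (h : ∀ t, t < n → G.Adj (f t) (f (t + 1))) :
    (walkOfFn G f n h).support = (List.range (n + 1)).map f := by
  induction n with
  | zero => simp [walkOfFn, List.range_succ]
  | succ n ih =>
    rw [walkOfFn, Walk.support_concat, ih, List.range_succ (n := n + 1), List.map_append]
    simp

private lemma walkOfFn_getVert (G : SimpleGraph V) (f : ℕ → V) (n : ℕ)
    (h : ∀ t, t < n → G.Adj (f t) (f (t + 1))) {t : ℕ} (ht : t ≤ n) :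
    (walkOfFn G f n h).getVert t = f t := by
  have h1 := support_getElem?' (walkOfFn G f n h) t
  rw [walkOfFn_length, if_pos ht, walkOfFn_support] at h1
  rw [List.getElem?_map, List.getElem?_range (by omega)] at h1
  exact (Option.some_injective _ h1.symm)

private lemma emb_c4 {α : Type*} (H : SimpleGraph α) (U W Y X : α)
    (aUW : H.Adj U W) (aYW : H.Adj Y W) (aYX : H.Adj Y X) (aUX : H.Adj U X)
    (nUY : ¬ H.Adj U Y) (nWX : ¬ H.Adj W X)
    (neUW : U ≠ W) (neUX : U ≠ X) (neUY : U ≠ Y)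
    (neWY : W ≠ Y) (neXY : X ≠ Y) (neWX : W ≠ X) :
    Nonempty (cycleGraph 4 ↪g H) := by
  refine ⟨⟨⟨![U, W, Y, X], ?_⟩, ?_⟩⟩
  · intro x y hxy
    fin_cases x <;> fin_cases y <;>
      simp only [Matrix.cons_val_zero, Matrix.cons_val_one, Matrix.head_cons,
        Matrix.cons_val_two, Matrix.tail_cons, Matrix.cons_val_three, Fin.mk_zero,
        Fin.mk_one, Matrix.cons_val_fin_one, Fin.isValue] at hxy ⊢ <;>
      first
        | rfl
        | exact absurd hxy (by assumption)
        | exact absurd hxy.symm (by assumption)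
  · intro x y
    fin_cases x <;> fin_cases y <;>
      simp only [Matrix.cons_val_zero, Matrix.cons_val_one, Matrix.head_cons,
        Matrix.cons_val_two, Matrix.tail_cons, Matrix.cons_val_three, Fin.mk_zero,
        Fin.mk_one, Matrix.cons_val_fin_one] <;>
      first
        | exact iff_of_false (H.loopless.irrefl _) (by decide)
        | exact iff_of_true (by
            first
              | exact aUW | exact aUW.symm | exact aUX | exact aUX.symm
              | exact aYW | exact aYW.symm | exact aYX | exact aYX.symm) (by decide)
        | exact iff_of_false (by
            first
              | exact nUY | exact fun hh => nUY hh.symm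
              | exact nWX | exact fun hh => nWX hh.symm) (by decide)

private lemma build_c4 (U W X : Geodesic G a b) (i j : ℕ) (hij : i + 2 ≤ j)
    (hUW : DiffAt U W i) (hUX : DiffAt U X j) :
    Nonempty (cycleGraph 4 ↪g SPG G a b) := by
  set d := G.dist a b with hd
  have hi0 : 0 < i := hUW.pos
  have hid : i < d := hUW.lt
  have hj0 : 0 < j := hUX.pos
  have hjd : j < d := hUX.lt
  have hne : i ≠ j := by omega
  set f : ℕ → V := fun t =>
    if t = i then W.1.getVert t else if t = j then X.1.getVert t else U.1.getVert t with hf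
  have hfi : f i = W.1.getVert i := by simp [hf]
  have hfj : f j = X.1.getVert j := by simp [hf, hne.symm]
  have hfo : ∀ t, t ≠ i → t ≠ j → f t = U.1.getVert t := by
    intro t h1 h2; simp [hf, h1, h2]
  have hadjU : ∀ t, t < d → G.Adj (U.1.getVert t) (U.1.getVert (t + 1)) :=
    fun t ht => U.1.adj_getVert_succ (by rw [U.2.2]; exact ht)
  have hadjW : ∀ t, t < d → G.Adj (W.1.getVert t) (W.1.getVert (t + 1)) :=
    fun t ht => W.1.adj_getVert_succ (by rw [W.2.2]; exact ht)
  have hadjX : ∀ t, t < d → G.Adj (X.1.getVert t) (X.1.getVert (t + 1)) :=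
    fun t ht => X.1.adj_getVert_succ (by rw [X.2.2]; exact ht)
  have hadj : ∀ t, t < d → G.Adj (f t) (f (t + 1)) := by
    intro t ht
    rcases eq_or_ne (t + 1) i with h1 | h1
    · rw [hfo t (by omega) (by omega), h1, hfi, hUW.2 t (by omega), ← h1]
      exact hadjW t ht
    rcases eq_or_ne t i with h2 | h2
    · rw [h2, hfi, hfo (i + 1) (by omega) (by omega), hUW.2 (i + 1) (by omega)]
      exact hadjW i (by omega)
    rcases eq_or_ne (t + 1) j with h3 | h3
    · rw [hfo t h2 (by omega), h3, hfj, hUX.2 t (by omega), ← h3]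
      exact hadjX t ht
    rcases eq_or_ne t j with h4 | h4
    · rw [h4, hfj, hfo (j + 1) (by omega) (by omega), hUX.2 (j + 1) (by omega)]
      exact hadjX j (by omega)
    · rw [hfo t h2 h4, hfo (t + 1) h1 h3]
      exact hadjU t ht
  have hf0 : f 0 = a := by rw [hfo 0 (by omega) (by omega), Walk.getVert_zero]
  have hfd : f d = b := by
    rw [hfo d (by omega) (by omega)]
    exact geodesic_getVert_b U le_rfl
  have hdistf : ∀ t, t ≤ d → G.dist a (f t) = t := by
    intro t ht
    rcases eq_or_ne t i with h | h
    · rw [h, hfi]; exact geodesic_dist W (by omega)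
    rcases eq_or_ne t j with h' | h'
    · rw [h', hfj]; exact geodesic_dist X (by omega)
    · rw [hfo t h h']; exact geodesic_dist U ht
  let yw : G.Walk a b := (walkOfFn G f d hadj).copy hf0 hfd
  have hylen : yw.length = d := by simp [yw, walkOfFn_length]
  have hysup : yw.support = (List.range (d + 1)).map f := by
    simp [yw, Walk.support_copy, walkOfFn_support]
  have hypath : yw.IsPath := by
    rw [Walk.isPath_def, hysup]
    refine List.Nodup.map_on ?_ List.nodup_range
    intro s hs t ht hst
    rw [List.mem_range] at hs ht
    rw [← hdistf s (by omega), ← hdistf t (by omega), hst]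
  let Y : Geodesic G a b := ⟨yw, hypath, hylen⟩
  have hyget : ∀ t, t ≤ d → Y.1.getVert t = f t := by
    intro t ht
    show yw.getVert t = f t
    simp [yw, Walk.getVert_copy, walkOfFn_getVert G f d hadj ht]
  have hYi : Y.1.getVert i = W.1.getVert i := by rw [hyget i (by omega), hfi]
  have hYj : Y.1.getVert j = X.1.getVert j := by rw [hyget j (by omega), hfj]
  have hYo : ∀ t, t ≠ i → t ≠ j → Y.1.getVert t = U.1.getVert t := by
    intro t h1 h2
    by_cases ht : t ≤ d
    · rw [hyget t ht, hfo t h1 h2]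
    · push_neg at ht
      rw [geodesic_getVert_b Y ht.le, geodesic_getVert_b U ht.le]
  have hWU : ∀ t, t ≠ i → W.1.getVert t = U.1.getVert t := fun t h => (hUW.2 t h).symm
  have hXU : ∀ t, t ≠ j → X.1.getVert t = U.1.getVert t := fun t h => (hUX.2 t h).symm
  have dYW : DiffAt Y W j := by
    constructor
    · rw [hYj, hWU j (by omega)]
      exact fun hh => hUX.1 hh.symm
    · intro t ht
      rcases eq_or_ne t i with h | h
      · rw [h, hYi]
      · rw [hYo t h ht]; exact hUW.2 t h
  have dYX : DiffAt Y X i := by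
    constructor
    · rw [hYi, hXU i (by omega)]
      exact fun hh => hUW.1 hh.symm
    · intro t ht
      rcases eq_or_ne t j with h | h
      · rw [h, hYj]
      · rw [hYo t ht h]; exact hUX.2 t h
  have aUW : (SPG G a b).Adj U W := adj_iff.mpr ⟨i, hUW⟩
  have aUX : (SPG G a b).Adj U X := adj_iff.mpr ⟨j, hUX⟩
  have aYW : (SPG G a b).Adj Y W := adj_iff.mpr ⟨j, dYW⟩
  have aYX : (SPG G a b).Adj Y X := adj_iff.mpr ⟨i, dYX⟩
  have nUY : ¬ (SPG G a b).Adj U Y := by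
    rw [adj_iff]
    rintro ⟨m, hm⟩
    have h1 : U.1.getVert i ≠ Y.1.getVert i := by rw [hYi]; exact hUW.1
    have h2 : U.1.getVert j ≠ Y.1.getVert j := by rw [hYj]; exact hUX.1
    have hmi : i = m := by by_contra hh; exact h1 (hm.2 i hh)
    have hmj : j = m := by by_contra hh; exact h2 (hm.2 j hh)
    omega
  have nWX : ¬ (SPG G a b).Adj W X := by
    rw [adj_iff]
    rintro ⟨m, hm⟩
    have h1 : W.1.getVert i ≠ X.1.getVert i := by
      rw [hXU i (by omega)]
      exact fun hh => hUW.1 hh.symm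
    have h2 : W.1.getVert j ≠ X.1.getVert j := by
      rw [hWU j (by omega)]
      exact hUX.1
    have hmi : i = m := by by_contra hh; exact h1 (hm.2 i hh)
    have hmj : j = m := by by_contra hh; exact h2 (hm.2 j hh)
    omega
  have neUW : U ≠ W := fun h => hUW.1 (by rw [h])
  have neUX : U ≠ X := fun h => hUX.1 (by rw [h])
  have neUY : U ≠ Y := fun h => hUW.1 (by rw [h, hYi])
  have neWY : W ≠ Y := fun h => dYW.1 (by rw [h])
  have neXY : X ≠ Y := fun h => dYX.1 (by rw [h])
  have neWX : W ≠ X := fun h => hUW.1 (by rw [h]; exact hUX.2 i (by omega))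
  exact emb_c4 (SPG G a b) U W Y X aUW aYW aYX aUX nUY nWX neUW neUX neUY neWY neXY neWX

end Aux

open Fin.NatCast Fin.CommRing


/-- an induced odd cycle of length greater than 5 in a shortest path
graph forces an induced 4-cycle. -/
theorem stmt_19 {V : Type*} (G : SimpleGraph V) (a b : V) (hab : a ≠ b)
    (k : ℕ) (hk : 5 < k) (hodd : Odd k)
    (h : Nonempty (cycleGraph k ↪g SPG G a b)) :
    Nonempty (cycleGraph 4 ↪g SPG G a b) := by
  obtain ⟨m, rfl⟩ : ∃ m, k = m + 6 := ⟨k - 6, by omega⟩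
  obtain ⟨e⟩ := h
  haveI : NeZero (m + 6) := ⟨by omega⟩
  have key : ∀ c : ℕ, 0 < c → c < m + 6 → ((c : Fin (m + 6)) ≠ 0) := by
    intro c h1 h2 hc
    rw [Fin.natCast_eq_zero] at hc
    have := Nat.le_of_dvd h1 hc
    omega
  have hadjnext : ∀ t : Fin (m + 6), (cycleGraph (m + 6)).Adj t (t + 1) := by
    intro t
    rw [cycleGraph_adj']
    right
    rw [add_sub_cancel_left, Fin.val_one']
    exact Nat.mod_eq_of_lt (by omega)
  have hnadj2 : ∀ t : Fin (m + 6), ¬ (cycleGraph (m + 6)).Adj t (t + 2) := by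
    intro t hadj
    rw [cycleGraph_adj'] at hadj
    rcases hadj with hc | hc
    · rw [sub_add_cancel_left] at hc
      have h1 : (-2 : Fin (m + 6)) = 1 := by
        apply Fin.ext
        rw [hc, Fin.val_one']
        exact (Nat.mod_eq_of_lt (by omega)).symm
      have h2 : (2 + 1 : Fin (m + 6)) = 0 := neg_eq_iff_add_eq_zero.mp h1
      have h3 : ((3 : ℕ) : Fin (m + 6)) = 0 := by push_cast; rw [← h2]; ring
      exact key 3 (by omega) (by omega) h3
    · rw [add_sub_cancel_left] at hc
      have h1 : ((2 : ℕ) : Fin (m + 6)).val = 1 := by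
        rw [Nat.cast_ofNat]; exact hc
      rw [Fin.val_natCast, Nat.mod_eq_of_lt (by omega)] at h1
      omega
  have hne2 : ∀ t : Fin (m + 6), t ≠ t + 2 := by
    intro t hteq
    have h1 : (2 : Fin (m + 6)) = 0 := left_eq_add.mp hteq
    exact key 2 (by omega) (by omega) (by rw [Nat.cast_ofNat]; exact h1)
  have ht2 : ∀ t : Fin (m + 6), t + 1 + 1 = t + 2 := by
    intro t
    rw [add_assoc, one_add_one_eq_two]
  have eadj : ∀ t : Fin (m + 6), (SPG G a b).Adj (e t) (e (t + 1)) :=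
    fun t => e.map_adj_iff.mpr (hadjnext t)
  have hi : ∀ t : Fin (m + 6), ∃ n, DiffAt (e t) (e (t + 1)) n :=
    fun t => adj_iff.mp (eadj t)
  choose i hdiff using hi
  have henadj : ∀ t, ¬ (SPG G a b).Adj (e t) (e (t + 2)) :=
    fun t hh => hnadj2 t (e.map_adj_iff.mp hh)
  have hene : ∀ t, e t ≠ e (t + 2) := fun t hh => hne2 t (e.injective hh)
  have hstepne : ∀ t : Fin (m + 6), i t ≠ i (t + 1) := by
    intro t heq
    have d1 := hdiff t
    have d2 := hdiff (t + 1)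
    rw [← heq, ht2 t] at d2
    by_cases hac : (e t).1.getVert (i t) = (e (t + 2)).1.getVert (i t)
    · apply hene t
      apply geodesic_ext
      intro s
      rcases eq_or_ne s (i t) with hs | hs
      · rw [hs]; exact hac
      · rw [d1.2 s hs, d2.2 s hs]
    · apply henadj t
      rw [adj_iff]
      exact ⟨i t, hac, fun s hs => by rw [d1.2 s hs, d2.2 s hs]⟩
  by_cases hall : ∀ t : Fin (m + 6), i (t + 1) = i t + 1 ∨ i t = i (t + 1) + 1
  · exfalso
    set g : Fin (m + 6) → ZMod 2 := fun t => (i t : ZMod 2) with hg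
    have h2 : (1 + 1 : ZMod 2) = 0 := by decide
    have hstep : ∀ t, g (t + 1) = g t + 1 := by
      intro t
      rcases hall t with hcase | hcase
      · show ((i (t + 1) : ℕ) : ZMod 2) = ((i t : ℕ) : ZMod 2) + 1
        rw [hcase]; push_cast; ring
      · show ((i (t + 1) : ℕ) : ZMod 2) = ((i t : ℕ) : ZMod 2) + 1
        rw [hcase]; push_cast; rw [add_assoc, h2, add_zero]
    have hiter : ∀ n : ℕ, g ((n : Fin (m + 6))) = g 0 + (n : ZMod 2) := by
      intro n
      induction n with
      | zero => simp
      | succ n ih =>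
        have hcast : ((n + 1 : ℕ) : Fin (m + 6)) = ((n : ℕ) : Fin (m + 6)) + 1 := by
          push_cast; ring
        rw [hcast, hstep, ih]
        push_cast; ring
    have h6 := hiter (m + 6)
    rw [Fin.natCast_self] at h6
    have hk2 : ((m + 6 : ℕ) : ZMod 2) = 0 := left_eq_add.mp h6
    rw [ZMod.natCast_eq_zero_iff] at hk2
    rw [Nat.odd_iff] at hodd
    omega
  · push_neg at hall
    obtain ⟨t, htno⟩ := hall
    have hnet := hstepne t
    have d1 := (hdiff t).symm
    have d2 := hdiff (t + 1)
    rcases (by omega : i t + 2 ≤ i (t + 1) ∨ i (t + 1) + 2 ≤ i t) with hc | hc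
    · exact build_c4 (e (t + 1)) (e t) (e (t + 1 + 1)) (i t) (i (t + 1)) hc d1 d2
    · exact build_c4 (e (t + 1)) (e (t + 1 + 1)) (e t) (i (t + 1)) (i t) hc d2 d1
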